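/- Suppose A > 3 and D = (A-3)/2 > 0. Then for the branch defined by D(r_s/r) = ω^(1/2)(Aω - 1) with ω ≥ 1/3, as r → 0+ we have ω(r) → ∞, and moreover ω(r) · (Ar/(D r_s))^(2/3) → 1. -/

import Mathlib

open Real Set Filter

/-- For A > 3, D = (A-3)/2 > 0, r_s > 0, and ω the branch of
D·(r_s/r) = √ω(Aω-1) with ω ≥ 1/3 on (0, (3√3/2)r_s]:
as r → 0⁺, ω(r) → ∞ and ω(r)·(A·r/(D·r_s))^(2/3) → 1. -/
theorem stmt_10 (A D r_s : ℝ) (ω : ℝ → ℝ) (hA : 3 < A) (hD : D = (A - 3) / 2)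
    (hrs : 0 < r_s)
    (hbranch : ∀ r ∈ Ioc (0 : ℝ) (3 * Real.sqrt 3 / 2 * r_s),
      D * (r_s / r) = Real.sqrt (ω r) * (A * ω r - 1) ∧ 1/3 ≤ ω r) :
    Tendsto ω (nhdsWithin 0 (Ioi 0)) atTop ∧
    Tendsto (fun r => ω r * (A * r / (D * r_s)) ^ ((2 : ℝ)/3))
      (nhdsWithin 0 (Ioi 0)) (nhds 1) := by
  have hD0 : 0 < D := by rw [hD]; linarith
  have hA0 : (0:ℝ) < A := by linarith
  have hmono : ∀ a b : ℝ, 1/3 ≤ a → a ≤ b →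
      Real.sqrt a * (A * a - 1) ≤ Real.sqrt b * (A * b - 1) := by
    intro a b ha hab
    have hb : 1/3 ≤ b := le_trans ha hab
    have h1 : (0:ℝ) ≤ A * a - 1 := by nlinarith
    exact mul_le_mul (Real.sqrt_le_sqrt hab) (by nlinarith) h1 (Real.sqrt_nonneg b)
  have hbound : 0 < 3 * Real.sqrt 3 / 2 * r_s := by
    have := Real.sqrt_pos.mpr (by norm_num : (0:ℝ) < 3)
    positivity
  have part1 : Tendsto ω (nhdsWithin 0 (Ioi 0)) atTop := by
    rw [tendsto_atTop]
    intro M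
    set M' := max M (1/3) with hM'
    have hM'3 : 1/3 ≤ M' := le_max_right _ _
    have hC : 0 < Real.sqrt M' * (A * M' - 1) := by
      have hs : (0:ℝ) < Real.sqrt M' := Real.sqrt_pos.mpr (by linarith)
      exact mul_pos hs (by nlinarith)
    set C := Real.sqrt M' * (A * M' - 1) with hCdef
    set ε := min (D * r_s / C) (3 * Real.sqrt 3 / 2 * r_s) with hε
    have hε0 : 0 < ε := lt_min (by positivity) hbound
    filter_upwards [Ioo_mem_nhdsGT_of_mem (Set.mem_Ico.mpr ⟨le_refl (0:ℝ), hε0⟩)] with r hr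
    obtain ⟨hr0, hrε⟩ := hr
    have hrb : r ∈ Ioc (0:ℝ) (3 * Real.sqrt 3 / 2 * r_s) :=
      ⟨hr0, le_trans hrε.le (min_le_right _ _)⟩
    obtain ⟨heq, hω⟩ := hbranch r hrb
    by_contra h
    push_neg at h
    have hωM' : ω r ≤ M' := le_trans h.le (le_max_left _ _)
    have h2 : Real.sqrt (ω r) * (A * ω r - 1) ≤ C := hmono _ _ hω hωM'
    have hrC : r < D * r_s / C := lt_of_lt_of_le hrε (min_le_left _ _)
    have h4 : r * C < D * r_s := (lt_div_iff₀ hC).mp hrC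
    have h3 : C < D * (r_s / r) := by
      rw [mul_div_assoc', lt_div_iff₀ hr0]; linarith
    rw [heq] at h3
    linarith
  refine ⟨part1, ?_⟩
  have hev : (fun r => (A * ω r / (A * ω r - 1)) ^ ((2:ℝ)/3)) =ᶠ[nhdsWithin 0 (Ioi 0)]
      (fun r => ω r * (A * r / (D * r_s)) ^ ((2:ℝ)/3)) := by
    filter_upwards [Ioo_mem_nhdsGT_of_mem (Set.mem_Ico.mpr ⟨le_refl (0:ℝ), hbound⟩)] with r hr
    obtain ⟨hr0, hrb⟩ := hr
    obtain ⟨heq, hω⟩ := hbranch r ⟨hr0, hrb.le⟩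
    set w := ω r with hwdef
    have hw0 : (0:ℝ) < w := by linarith
    have hAw : (0:ℝ) < A * w - 1 := by nlinarith
    have hs0 : (0:ℝ) < Real.sqrt w := Real.sqrt_pos.mpr hw0
    have hkey : D * r_s = Real.sqrt w * (A * w - 1) * r := by
      rw [mul_div_assoc'] at heq
      field_simp at heq
      linarith
    have hAr : A * r / (D * r_s) = A / (Real.sqrt w * (A * w - 1)) := by
      rw [hkey]
      field_simp
    rw [hAr]
    rw [Real.sqrt_eq_rpow]
    rw [Real.div_rpow hA0.le (by positivity), Real.mul_rpow (by positivity) hAw.le,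
        ← Real.rpow_mul hw0.le]
    norm_num
    rw [Real.div_rpow (by positivity) hAw.le, Real.mul_rpow hA0.le hw0.le]
    have hsplit : w = w ^ ((1:ℝ)/3) * w ^ ((2:ℝ)/3) := by
      rw [← Real.rpow_add hw0]; norm_num
    have h13 : (0:ℝ) < w ^ ((1:ℝ)/3) := Real.rpow_pos_of_pos hw0 _
    have h23 : (0:ℝ) < (A * w - 1) ^ ((2:ℝ)/3) := Real.rpow_pos_of_pos hAw _
    field_simp
    linear_combination (-1:ℝ) * hsplit
  have h1 : Tendsto (fun r => A * ω r - 1) (nhdsWithin 0 (Ioi 0)) atTop := by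
    apply tendsto_atTop_add_const_right
    exact Tendsto.const_mul_atTop hA0 part1
  have hinv : Tendsto (fun r => 1 / (A * ω r - 1)) (nhdsWithin 0 (Ioi 0)) (nhds 0) := by
    simpa [Pi.inv_def] using h1.inv_tendsto_atTop
  have h2 : Tendsto (fun r => A * ω r / (A * ω r - 1)) (nhdsWithin 0 (Ioi 0)) (nhds 1) := by
    have h3 : Tendsto (fun r => 1 + 1 / (A * ω r - 1)) (nhdsWithin 0 (Ioi 0)) (nhds 1) := by
      simpa using (tendsto_const_nhds.add hinv)
    apply h3.congr'
    filter_upwards [h1.eventually_gt_atTop 0] with r hr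
    field_simp
    ring
  have hlim := h2.rpow_const (p := (2:ℝ)/3) (Or.inl one_ne_zero)
  rw [Real.one_rpow] at hlim
  exact Tendsto.congr' hev hlim
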